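/- Suppose Ω satisfies Condition (*) and fix p ∈ {1,…,k+2}. Then the set N^p_Ω = {x ∈ N_Ω : x_p = 0} is nonempty, and for any x, y ∈ N^p_Ω there exist a (k+2)-tuple t of unit complex quaternions and a unit quaternion s such that y_q = t_q·x_q·s⁻¹ for all q ∈ {1,…,k+2}. -/

import Mathlib

open Finset
open scoped Quaternion

/-- The imaginary unit `i` of the quaternions. -/
def qI : ℍ := ⟨0, 1, 0, 0⟩

/-- A quaternion is a *unit complex* quaternion if its `j`- and `k`-components vanish
and it has norm `1`. -/
def IsUnitComplexQ (z : ℍ) : Prop := z.imJ = 0 ∧ z.imK = 0 ∧ ‖z‖ = 1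

/-- Determinant of the submatrix of `Ω` obtained by deleting the rows in `s`. -/
noncomputable def minorDet (k : ℕ) (Ω : Matrix (Fin (k + 2)) (Fin k) ℤ)
    (s : Finset (Fin (k + 2))) : ℤ :=
  if h : sᶜ.card = k then (Ω.submatrix (sᶜ.orderEmbOfFin h) id).det else 0

/-- `Δ_{pq}`: determinant of `Ω` with rows `p` and `q` deleted. -/
noncomputable def Delta (k : ℕ) (Ω : Matrix (Fin (k + 2)) (Fin k) ℤ) (p q : Fin (k + 2)) : ℤ :=
  minorDet k Ω {p, q}

/-- Condition (*). -/
def CondStar (k : ℕ) (Ω : Matrix (Fin (k + 2)) (Fin k) ℤ) : Prop :=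
  (∀ p q : Fin (k + 2), p ≠ q → Delta k Ω p q ≠ 0) ∧
  (∀ p : Fin (k + 2), (Finset.univ.erase p).gcd (fun q => (Delta k Ω p q).natAbs) = 1)

/-- The zero set `N_Ω` of the moment map `μ_Ω`, inside the unit sphere of `ℍ^{k+2}`. -/
def NOmega (k : ℕ) (Ω : Matrix (Fin (k + 2)) (Fin k) ℤ) : Set (Fin (k + 2) → ℍ) :=
  {x | (∑ p : Fin (k + 2), ‖x p‖ ^ 2 = 1) ∧
    ∀ j : Fin k, ∑ p : Fin (k + 2), star (x p) * qI * x p * ((Ω p j : ℤ) : ℍ) = 0}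

def qJ : ℍ := ⟨0, 0, 1, 0⟩

lemma norm_of_normSq {a : ℍ} {r : ℝ} (hr : 0 ≤ r) (h : Quaternion.normSq a = r ^ 2) : ‖a‖ = r := by
  have := Quaternion.normSq_eq_norm_mul_self a
  nlinarith [norm_nonneg a]

lemma norm_qI : ‖qI‖ = 1 := by
  refine norm_of_normSq zero_le_one ?_
  rw [Quaternion.normSq_def']; simp [qI]

lemma norm_qJ : ‖qJ‖ = 1 := by
  refine norm_of_normSq zero_le_one ?_
  rw [Quaternion.normSq_def']; simp [qJ]

lemma commute_qI {t : ℍ} (h : t * qI = qI * t) : t.imJ = 0 ∧ t.imK = 0 := by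
  rw [Quaternion.ext_iff] at h
  simp only [Quaternion.re_mul, Quaternion.imI_mul, Quaternion.imJ_mul, Quaternion.imK_mul] at h
  simp only [qI] at h
  constructor <;> linarith [h.2.2.1, h.2.2.2]

lemma starjij : star qJ * qI * qJ = -qI := by
  ext <;> simp [Quaternion.re_mul, Quaternion.imI_mul, Quaternion.imJ_mul,
    Quaternion.imK_mul, Quaternion.re_star, Quaternion.imI_star, Quaternion.imJ_star,
    Quaternion.imK_star] <;> simp [qI, qJ]

lemma norm_conjI (x : ℍ) : ‖star x * qI * x‖ = ‖x‖ ^ 2 := by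
  rw [norm_mul, norm_mul, Quaternion.norm_star, norm_qI, sq]; ring

/-- Key division lemma. -/
lemma keyD {x y : ℍ} (hx : x ≠ 0) (hn : ‖y‖ = ‖x‖)
    (h : star y * qI * y = star x * qI * x) :
    ∃ t : ℍ, IsUnitComplexQ t ∧ y = t * x := by
  refine ⟨y * x⁻¹, ?_, ?_⟩; swap
  · rw [inv_mul_cancel_right₀ hx]
  have ht : ‖y * x⁻¹‖ = 1 := by
    rw [norm_mul, norm_inv, hn]
    exact div_self (norm_ne_zero_iff.2 hx)
  have hyt : y = (y * x⁻¹) * x := by rw [inv_mul_cancel_right₀ hx]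
  set t := y * x⁻¹ with htdef
  have hts : star t * t = 1 := by
    have := Quaternion.star_mul_self t
    rw [Quaternion.normSq_eq_norm_mul_self, ht] at this
    simpa using this
  have hcomm : t * qI = qI * t := by
    have h2 : star x * (star t * qI * t) * x = star x * qI * x := by
      rw [hyt] at h
      rw [← h]; simp [mul_assoc, StarMul.star_mul]
    have hxs : star x ≠ 0 := star_ne_zero.2 hx
    have h3 : star t * qI * t = qI := by
      rw [mul_assoc (star x), mul_assoc (star x)] at h2
      have h4 := mul_left_cancel₀ hxs h2
      exact mul_right_cancel₀ hx h4
    calc t * qI = t * (star t * qI * t) := by rw [h3]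
    _ = (t * star t) * qI * t := by simp only [mul_assoc]
    _ = qI * t := by
        have : t * star t = 1 := by
          have := Quaternion.self_mul_star t
          rw [Quaternion.normSq_eq_norm_mul_self, ht] at this
          simpa using this
        rw [this, one_mul]
  exact ⟨(commute_qI hcomm).1, (commute_qI hcomm).2, ht⟩

section LA
variable (k : ℕ) (Ω : Matrix (Fin (k + 2)) (Fin k) ℤ) (p : Fin (k + 2))

/-- rows of Ω other than p -/
noncomputable def rowsA : Matrix (Fin (k + 1)) (Fin k) ℤ := Ω.submatrix p.succAbove id

/-- cofactor vector -/
noncomputable def cof : Fin (k + 1) → ℤ :=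
  fun i => (-1) ^ (i : ℕ) * ((rowsA k Ω p).submatrix i.succAbove id).det

/-- (A): the cofactor vector is in the kernel of the transpose. -/
lemma cof_kernel (j : Fin k) : ∑ i, cof k Ω p i * rowsA k Ω p i j = 0 := by
  classical
  set A := rowsA k Ω p
  set B : Matrix (Fin (k + 1)) (Fin (k + 1)) ℤ :=
    fun r c => Fin.cases (A r j) (fun c' => A r c') c with hB
  have hdet : B.det = 0 := by
    exact Matrix.det_zero_of_column_eq (Fin.succ_ne_zero j).symm
      (fun r => by simp [hB])
  have hexp := Matrix.det_succ_column_zero B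
  rw [hdet] at hexp
  have hsub : ∀ i : Fin (k + 1), B.submatrix i.succAbove Fin.succ = A.submatrix i.succAbove id := by
    intro i; ext r c; rw [Matrix.submatrix_apply, Matrix.submatrix_apply, hB]; simp
  symm
  rw [hexp]
  refine Finset.sum_congr rfl fun i _ => ?_
  rw [hsub i]
  simp only [cof, hB]
  ring_nf
  simp [A]
  ring
end LA

section LA2
variable (k : ℕ) (Ω : Matrix (Fin (k + 2)) (Fin k) ℤ) (p : Fin (k + 2))

lemma compl_card (q : Fin (k + 2)) (hq : q ≠ p) : ({p, q} : Finset (Fin (k+2)))ᶜ.card = k := by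
  rw [Finset.card_compl, Finset.card_insert_of_notMem (by simp [hq.symm]), Finset.card_singleton]
  simp

lemma cof_eq_delta (i : Fin (k + 1)) :
    cof k Ω p i = (-1) ^ (i : ℕ) * Delta k Ω p (p.succAbove i) := by
  have hq : p.succAbove i ≠ p := Fin.succAbove_ne p i
  have hcard := compl_card k p (p.succAbove i) hq
  have hmono : StrictMono (fun l : Fin k => p.succAbove (i.succAbove l)) :=
    (Fin.strictMono_succAbove p).comp (Fin.strictMono_succAbove i)
  have hmem : ∀ l, (fun l : Fin k => p.succAbove (i.succAbove l)) l ∈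
      ({p, p.succAbove i} : Finset (Fin (k+2)))ᶜ := by
    intro l
    simp only [Finset.mem_compl, Finset.mem_insert, Finset.mem_singleton]
    push_neg
    exact ⟨Fin.succAbove_ne p _, fun h => Fin.succAbove_ne i l ((Fin.succAbove_right_injective) h)⟩
  have heq := Finset.orderEmbOfFin_unique hcard hmem hmono
  unfold cof Delta minorDet
  rw [dif_pos hcard]
  congr 1
  rw [← heq]
  rfl

lemma cof_ne_zero (hΩ : ∀ p q : Fin (k + 2), p ≠ q → Delta k Ω p q ≠ 0) (i : Fin (k + 1)) :
    cof k Ω p i ≠ 0 := by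
  rw [cof_eq_delta]
  exact mul_ne_zero (pow_ne_zero _ (by norm_num)) (hΩ p _ (Fin.ne_succAbove p i))
end LA2

section LA3'
variable (k : ℕ) (Ω : Matrix (Fin (k + 2)) (Fin k) ℤ) (p : Fin (k + 2))

lemma kernel_eq (hΩ : ∀ p q : Fin (k + 2), p ≠ q → Delta k Ω p q ≠ 0)
    (v : Fin (k + 1) → ℍ) (hv : ∀ j, ∑ i, v i * ((rowsA k Ω p i j : ℤ) : ℍ) = 0) :
    ∃ w : ℍ, ∀ i, v i = ((cof k Ω p i : ℤ) : ℍ) * w := by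
  classical
  set A := rowsA k Ω p with hA
  have castH : ∀ n : ℤ, ((n : ℤ) : ℍ) = (((n : ℤ) : ℝ) : ℍ) := fun n => by
    rw [Quaternion.coe_intCast]
  have castH_ne : ∀ n : ℤ, n ≠ 0 → ((n : ℤ) : ℍ) ≠ 0 := by
    intro n hn
    rw [castH n]
    intro h
    exact hn (by exact_mod_cast Quaternion.coe_injective (h.trans (Quaternion.coe_zero).symm))
  have hc0 : ((cof k Ω p 0 : ℤ) : ℍ) ≠ 0 := castH_ne _ (cof_ne_zero k Ω p hΩ 0)
  set w : ℍ := ((cof k Ω p 0 : ℤ) : ℍ)⁻¹ * v 0 with hw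
  refine ⟨w, ?_⟩
  set v' : Fin (k + 1) → ℍ := fun i => v i - ((cof k Ω p i : ℤ) : ℍ) * w with hv'
  have hv'0 : v' 0 = 0 := by
    simp only [hv', hw]
    rw [← mul_assoc, mul_inv_cancel₀ hc0, one_mul, sub_self]
  have hker : ∀ j, ∑ i, v' i * ((A i j : ℤ) : ℍ) = 0 := by
    intro j
    have h1 : ∑ i, ((cof k Ω p i : ℤ) : ℍ) * w * ((A i j : ℤ) : ℍ)
        = ((∑ i, cof k Ω p i * A i j : ℤ) : ℍ) * w := by
      push_cast
      rw [Finset.sum_mul]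
      refine Finset.sum_congr rfl fun i _ => ?_
      rw [mul_assoc ((cof k Ω p i : ℤ) : ℍ) w, mul_assoc ((cof k Ω p i : ℤ) : ℍ)]
      exact congrArg _ (Int.cast_comm (A i j) w).symm
    simp only [hv', sub_mul, Finset.sum_sub_distrib, hv j, h1, cof_kernel k Ω p j]
    simp
    left; have hck := cof_kernel k Ω p j; rw [← hA] at hck
    have hck' := congrArg (Int.cast : ℤ → ℍ) hck; push_cast at hck'; exact hck'
  -- invert the k×k matrix of the rows other than row 0
  set M : Matrix (Fin k) (Fin k) ℤ := A.submatrix Fin.succ id with hM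
  have hdetM : M.det = cof k Ω p 0 := by
    simp only [cof, hM, hA]
    rw [Fin.succAbove_zero]
    simp
  have hdetM0 : M.det ≠ 0 := hdetM ▸ cof_ne_zero k Ω p hΩ 0
  set MR : Matrix (Fin k) (Fin k) ℝ := M.map (Int.cast) with hMR
  have hdetMR : MR.det ≠ 0 := by
    have : MR.det = ((M.det : ℤ) : ℝ) := (RingHom.map_det (Int.castRingHom ℝ) M).symm
    rw [this]
    exact_mod_cast hdetM0
  have hMRinv : MR * MR⁻¹ = 1 := Matrix.mul_nonsing_inv MR (isUnit_iff_ne_zero.2 hdetMR)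
  set φ : ℝ →+* ℍ := algebraMap ℝ ℍ with hφ
  set Mℍ : Matrix (Fin k) (Fin k) ℍ := MR.map φ with hMH
  set N : Matrix (Fin k) (Fin k) ℍ := MR⁻¹.map φ with hN
  have hMN : Mℍ * N = 1 := by
    rw [hMH, hN, ← Matrix.map_mul, hMRinv, Matrix.map_one φ (map_zero φ) (map_one φ)]
  set u : Fin k → ℍ := fun l => v' l.succ with hu
  have huv : Matrix.vecMul u Mℍ = 0 := by
    funext j
    have hkj := hker j
    rw [Fin.sum_univ_succ, hv'0, zero_mul, zero_add] at hkj
    show dotProduct u (fun l => Mℍ l j) = 0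
    rw [show (0:ℍ) = ∑ i : Fin k, v' i.succ * ((A i.succ j : ℤ) : ℍ) from hkj.symm]
    refine Finset.sum_congr rfl fun l _ => ?_
    have hcast : (algebraMap ℝ ℍ) ((A l.succ j : ℤ) : ℝ) = ((A l.succ j : ℤ) : ℍ) := by
      rw [show (algebraMap ℝ ℍ) ((A l.succ j : ℤ) : ℝ) = (((A l.succ j : ℤ) : ℝ) : ℍ) from rfl,
        Quaternion.coe_intCast]
    simp only [hu, hMH, hMR, hM, Matrix.map_apply, Matrix.submatrix_apply, id_eq, hφ, hcast]
  have hu0 : u = 0 := by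
    have : Matrix.vecMul u (Mℍ * N) = Matrix.vecMul (Matrix.vecMul u Mℍ) N :=
      (Matrix.vecMul_vecMul u Mℍ N).symm
    rw [hMN, Matrix.vecMul_one, huv, Matrix.zero_vecMul] at this
    exact this
  intro i
  have hvi : v' i = 0 := by
    induction i using Fin.cases with
    | zero => exact hv'0
    | succ l => exact congrFun hu0 l
  simp only [hv'] at hvi
  exact sub_eq_zero.1 hvi
end LA3'

section MAIN
variable (k : ℕ) (Ω : Matrix (Fin (k + 2)) (Fin k) ℤ) (p : Fin (k + 2))

noncomputable def Ssum : ℝ := ∑ i : Fin (k + 1), |((cof k Ω p i : ℤ) : ℝ)|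

lemma normInt (n : ℤ) : ‖((n : ℤ) : ℍ)‖ = |(n : ℝ)| := by
  rw [← Quaternion.coe_intCast, Quaternion.norm_coe, Real.norm_eq_abs]

lemma Ssum_pos (hΩ : ∀ p q : Fin (k + 2), p ≠ q → Delta k Ω p q ≠ 0) : 0 < Ssum k Ω p := by
  apply Finset.sum_pos
  · intro i _
    rw [abs_pos]
    exact_mod_cast cof_ne_zero k Ω p hΩ i
  · exact Finset.univ_nonempty

lemma struct (hΩ : ∀ p q : Fin (k + 2), p ≠ q → Delta k Ω p q ≠ 0)
    (x : Fin (k + 2) → ℍ) (hx : x ∈ NOmega k Ω) (hxp : x p = 0) :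
    ∃ w : ℍ,
      (∀ i, star (x (p.succAbove i)) * qI * x (p.succAbove i) = ((cof k Ω p i : ℤ) : ℍ) * w) ∧
      ‖w‖ = (Ssum k Ω p)⁻¹ ∧
      (∀ i, ‖x (p.succAbove i)‖ ^ 2 = |((cof k Ω p i : ℤ) : ℝ)| * (Ssum k Ω p)⁻¹) := by
  have hS := Ssum_pos k Ω p hΩ
  obtain ⟨w, hw⟩ := kernel_eq k Ω p hΩ (fun i => star (x (p.succAbove i)) * qI * x (p.succAbove i))
    (by
      intro j
      have h2 := hx.2 j
      rw [Fin.sum_univ_succAbove _ p, hxp] at h2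
      simpa [rowsA] using h2)
  have hnorm : ∀ i, ‖x (p.succAbove i)‖ ^ 2 = |((cof k Ω p i : ℤ) : ℝ)| * ‖w‖ := by
    intro i
    rw [← norm_conjI, hw i, norm_mul, normInt]
  have hsum : Ssum k Ω p * ‖w‖ = 1 := by
    have h1 := hx.1
    rw [Fin.sum_univ_succAbove _ p, hxp] at h1
    simp only [norm_zero] at h1
    norm_num at h1
    rw [Ssum, Finset.sum_mul]
    calc ∑ i : Fin (k+1), |((cof k Ω p i : ℤ) : ℝ)| * ‖w‖
        = ∑ i : Fin (k+1), ‖x (p.succAbove i)‖ ^ 2 := by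
          exact Finset.sum_congr rfl fun i _ => (hnorm i).symm
      _ = 1 := by linarith [h1]
  have hwn : ‖w‖ = (Ssum k Ω p)⁻¹ := by
    field_simp
    linarith [hsum]
  exact ⟨w, hw, hwn, fun i => by rw [hnorm i, hwn]⟩

end MAIN


section POINT
variable (k : ℕ) (Ω : Matrix (Fin (k + 2)) (Fin k) ℤ) (p : Fin (k + 2))

noncomputable def epoint : Fin (k + 1) → ℍ :=
  fun i => ((Real.sqrt (|((cof k Ω p i : ℤ) : ℝ)| * (Ssum k Ω p)⁻¹) : ℝ) : ℍ) *
    (if 0 < cof k Ω p i then 1 else qJ)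

noncomputable def xpoint : Fin (k + 2) → ℍ :=
  fun q => if h : q = p then 0 else epoint k Ω p (Classical.choose (Fin.exists_succAbove_eq h))

lemma xpoint_p : xpoint k Ω p p = 0 := dif_pos rfl

lemma xpoint_succAbove (i : Fin (k + 1)) : xpoint k Ω p (p.succAbove i) = epoint k Ω p i := by
  have h : p.succAbove i ≠ p := Fin.succAbove_ne p i
  rw [xpoint, dif_neg h]
  congr 1
  exact Fin.succAbove_right_injective (Classical.choose_spec (Fin.exists_succAbove_eq h))

lemma epoint_norm_sq (hΩ : ∀ p q : Fin (k + 2), p ≠ q → Delta k Ω p q ≠ 0) (i : Fin (k + 1)) :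
    ‖epoint k Ω p i‖ ^ 2 = |((cof k Ω p i : ℤ) : ℝ)| * (Ssum k Ω p)⁻¹ := by
  have hS := Ssum_pos k Ω p hΩ
  have hnn : (0:ℝ) ≤ |((cof k Ω p i : ℤ) : ℝ)| * (Ssum k Ω p)⁻¹ := by positivity
  rw [epoint, norm_mul, Quaternion.norm_coe]
  have hu : ‖(if 0 < cof k Ω p i then (1:ℍ) else qJ)‖ = 1 := by
    split
    · exact norm_one
    · exact norm_qJ
  rw [hu, mul_one, Real.norm_eq_abs, abs_of_nonneg (Real.sqrt_nonneg _), Real.sq_sqrt hnn]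

lemma epoint_conj (hΩ : ∀ p q : Fin (k + 2), p ≠ q → Delta k Ω p q ≠ 0) (i : Fin (k + 1)) :
    star (epoint k Ω p i) * qI * epoint k Ω p i
      = (((cof k Ω p i : ℤ) : ℝ) * (Ssum k Ω p)⁻¹) • qI := by
  have hS := Ssum_pos k Ω p hΩ
  have hnn : (0:ℝ) ≤ |((cof k Ω p i : ℤ) : ℝ)| * (Ssum k Ω p)⁻¹ := by positivity
  set r : ℝ := Real.sqrt (|((cof k Ω p i : ℤ) : ℝ)| * (Ssum k Ω p)⁻¹) with hrdef
  have hr2 : r * r = |((cof k Ω p i : ℤ) : ℝ)| * (Ssum k Ω p)⁻¹ := Real.mul_self_sqrt hnn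
  set u : ℍ := if 0 < cof k Ω p i then (1:ℍ) else qJ with hu
  have hrearr : star (epoint k Ω p i) * qI * epoint k Ω p i
      = (r * r) • (star u * qI * u) := by
    rw [epoint, ← hrdef, ← hu, star_mul, Quaternion.star_coe, Quaternion.mul_coe_eq_smul,
      Quaternion.coe_mul_eq_smul, smul_mul_assoc, smul_mul_assoc, mul_smul_comm, smul_smul]
  rw [hrearr]
  by_cases hpos : 0 < cof k Ω p i
  · have h1 : u = 1 := if_pos hpos
    rw [h1]
    simp only [star_one, mul_one, one_mul]
    rw [hr2, abs_of_pos (by exact_mod_cast hpos)]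
  · have h1 : u = qJ := if_neg hpos
    have hneg : cof k Ω p i < 0 :=
      lt_of_le_of_ne (not_lt.1 hpos) (cof_ne_zero k Ω p hΩ i)
    rw [h1, starjij, smul_neg, ← neg_smul, hr2,
      abs_of_neg (show ((cof k Ω p i : ℤ) : ℝ) < 0 by exact_mod_cast hneg)]
    ring_nf

lemma xpoint_mem (hΩ : ∀ p q : Fin (k + 2), p ≠ q → Delta k Ω p q ≠ 0) :
    xpoint k Ω p ∈ NOmega k Ω := by
  have hS := Ssum_pos k Ω p hΩ
  constructor
  · rw [Fin.sum_univ_succAbove _ p, xpoint_p]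
    simp only [norm_zero]
    rw [show ((0:ℝ) ^ 2) = 0 by norm_num, zero_add]
    calc ∑ i : Fin (k+1), ‖xpoint k Ω p (p.succAbove i)‖ ^ 2
        = ∑ i : Fin (k+1), |((cof k Ω p i : ℤ) : ℝ)| * (Ssum k Ω p)⁻¹ := by
          refine Finset.sum_congr rfl fun i _ => ?_
          rw [xpoint_succAbove, epoint_norm_sq k Ω p hΩ]
      _ = Ssum k Ω p * (Ssum k Ω p)⁻¹ := by rw [Ssum, Finset.sum_mul]
      _ = 1 := mul_inv_cancel₀ (ne_of_gt hS)
  · intro j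
    rw [Fin.sum_univ_succAbove _ p, xpoint_p]
    simp only [star_zero, zero_mul, mul_zero, zero_add]
    calc ∑ i : Fin (k+1),
          star (xpoint k Ω p (p.succAbove i)) * qI * xpoint k Ω p (p.succAbove i) *
            ((Ω (p.succAbove i) j : ℤ) : ℍ)
        = ∑ i : Fin (k+1),
            (((cof k Ω p i * rowsA k Ω p i j : ℤ) : ℝ) * (Ssum k Ω p)⁻¹) • qI := by
          refine Finset.sum_congr rfl fun i _ => ?_
          rw [xpoint_succAbove, epoint_conj k Ω p hΩ]
          have hA : ((Ω (p.succAbove i) j : ℤ) : ℍ) = (((rowsA k Ω p i j : ℤ) : ℝ) : ℍ) := by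
            rw [Quaternion.coe_intCast]; rfl
          rw [hA, smul_mul_assoc, Quaternion.mul_coe_eq_smul, smul_smul]
          congr 1
          push_cast
          ring
      _ = 0 := by
          rw [← Finset.sum_smul]
          have hz : ∑ i : Fin (k+1), (((cof k Ω p i * rowsA k Ω p i j : ℤ) : ℝ) *
              (Ssum k Ω p)⁻¹) = 0 := by
            rw [← Finset.sum_mul, ← Int.cast_sum, cof_kernel k Ω p j]
            norm_num
          rw [hz, zero_smul]
end POINT

lemma intCast_q_ne_zero {n : ℤ} (hn : n ≠ 0) : ((n : ℤ) : ℍ) ≠ 0 := by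
  rw [show ((n : ℤ) : ℍ) = (((n : ℤ) : ℝ) : ℍ) from (Quaternion.coe_intCast _).symm]
  intro h
  exact hn (by exact_mod_cast Quaternion.coe_injective (h.trans (Quaternion.coe_zero).symm))

section TRANS
variable (k : ℕ) (Ω : Matrix (Fin (k + 2)) (Fin k) ℤ) (p : Fin (k + 2))

lemma trans_main (hΩ : ∀ p q : Fin (k + 2), p ≠ q → Delta k Ω p q ≠ 0)
    (x : Fin (k + 2) → ℍ) (hx : x ∈ NOmega k Ω) (hxp : x p = 0)
    (y : Fin (k + 2) → ℍ) (hy : y ∈ NOmega k Ω) (hyp : y p = 0) :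
    ∃ t : Fin (k + 2) → ℍ, (∀ q, IsUnitComplexQ (t q)) ∧
      ∃ s : ℍ, ‖s‖ = 1 ∧ ∀ q, y q = t q * x q * s⁻¹ := by
  have hS := Ssum_pos k Ω p hΩ
  obtain ⟨wx, hwx, hwxn, hxn⟩ := struct k Ω p hΩ x hx hxp
  obtain ⟨wy, hwy, hwyn, hyn⟩ := struct k Ω p hΩ y hy hyp
  have hcabs : ∀ i : Fin (k+1), (0:ℝ) < |((cof k Ω p i : ℤ) : ℝ)| := fun i =>
    abs_pos.2 (by exact_mod_cast cof_ne_zero k Ω p hΩ i)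
  have hxne : ∀ i, x (p.succAbove i) ≠ 0 := by
    intro i h
    have := hxn i
    rw [h, norm_zero] at this
    nlinarith [hcabs i, inv_pos.2 hS]
  have hyne : ∀ i, y (p.succAbove i) ≠ 0 := by
    intro i h
    have := hyn i
    rw [h, norm_zero] at this
    nlinarith [hcabs i, inv_pos.2 hS]
  set a := x (p.succAbove 0) with hadef
  set b := y (p.succAbove 0) with hbdef
  have ha : a ≠ 0 := hxne 0
  have hb : b ≠ 0 := hyne 0
  have hnab : ‖a‖ = ‖b‖ := by
    nlinarith [norm_nonneg a, norm_nonneg b, hxn 0, hyn 0]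
  set s : ℍ := a⁻¹ * b with hsdef
  have hs : a * s = b := by rw [hsdef, ← mul_assoc, mul_inv_cancel₀ ha, one_mul]
  have hsn : ‖s‖ = 1 := by
    rw [hsdef, norm_mul, norm_inv, hnab]
    exact inv_mul_cancel₀ (norm_ne_zero_iff.2 hb)
  have hsne : s ≠ 0 := norm_ne_zero_iff.1 (by rw [hsn]; norm_num)
  have hcof0 : ((cof k Ω p 0 : ℤ) : ℍ) ≠ 0 := intCast_q_ne_zero (cof_ne_zero k Ω p hΩ 0)
  have hconj : ∀ z : ℍ, star (z * s) * qI * (z * s) = star s * (star z * qI * z) * s := by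
    intro z
    rw [star_mul]
    simp only [mul_assoc]
  have hcent : ∀ (n : ℤ) (z : ℍ), star s * (((n:ℤ):ℍ) * z) * s = ((n:ℤ):ℍ) * (star s * z * s) := by
    intro n z
    rw [← mul_assoc (star s), ← Int.cast_comm n (star s)]
    simp only [mul_assoc]
  have hwy_eq : wy = star s * wx * s := by
    have h3 := hconj a
    rw [hs, hwy 0, hwx 0, hcent] at h3
    exact mul_left_cancel₀ hcof0 h3
  have key : ∀ i : Fin (k+1), ∃ t : ℍ, IsUnitComplexQ t ∧
      y (p.succAbove i) = t * (x (p.succAbove i) * s) := by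
    intro i
    apply keyD (mul_ne_zero (hxne i) hsne)
    · have h1 : ‖x (p.succAbove i) * s‖ = ‖x (p.succAbove i)‖ := by
        rw [norm_mul, hsn, mul_one]
      rw [h1]
      nlinarith [norm_nonneg (x (p.succAbove i)), norm_nonneg (y (p.succAbove i)), hxn i, hyn i]
    · rw [hconj, hwy i, hwx i, hwy_eq, hcent]
  choose tf htf using key
  refine ⟨fun q => if h : q = p then 1 else tf (Classical.choose (Fin.exists_succAbove_eq h)),
    ?_, s⁻¹, by rw [norm_inv, hsn]; norm_num, ?_⟩
  · intro q
    dsimp only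
    by_cases h : q = p
    · rw [dif_pos h]
      refine ⟨rfl, rfl, norm_one⟩
    · rw [dif_neg h]
      exact (htf _).1
  · intro q
    dsimp only
    rw [inv_inv]
    by_cases h : q = p
    · rw [dif_pos h, h, hyp, hxp, mul_zero, zero_mul]
    · obtain ⟨i, hi⟩ := Fin.exists_succAbove_eq h
      rw [dif_neg h]
      have hch : Classical.choose (Fin.exists_succAbove_eq h) = i :=
        Fin.succAbove_right_injective
          ((Classical.choose_spec (Fin.exists_succAbove_eq h)).trans hi.symm)
      rw [hch, ← hi, (htf i).2, mul_assoc]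
end TRANS

/-- `N^p_Ω` is nonempty and `T^{k+2} × S^3` acts transitively on it. -/
theorem NpOmega_nonempty_and_transitive (k : ℕ) (hk : 2 ≤ k)
    (Ω : Matrix (Fin (k + 2)) (Fin k) ℤ) (hΩ : CondStar k Ω) (p : Fin (k + 2)) :
    (∃ x ∈ NOmega k Ω, x p = 0) ∧
    (∀ x ∈ NOmega k Ω, x p = 0 → ∀ y ∈ NOmega k Ω, y p = 0 →
      ∃ t : Fin (k + 2) → ℍ, (∀ q, IsUnitComplexQ (t q)) ∧
        ∃ s : ℍ, ‖s‖ = 1 ∧ ∀ q, y q = t q * x q * s⁻¹) := by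
  constructor
  · exact ⟨xpoint k Ω p, xpoint_mem k Ω p hΩ.1, xpoint_p k Ω p⟩
  · intro x hx hxp y hy hyp
    exact trans_main k Ω p hΩ.1 x hx hxp y hy hyp
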